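/- Let Γ and G be finite nilpotent groups of the same order n, and let β : Γ → Hol(G) be an injective homomorphism whose image acts regularly on G. Then for every prime p dividing n and every prime q ≠ p dividing n, the composite map π_q ∘ β ∘ ι_p : Γ_p → Hol(G_q) is trivial, where Γ_p is the Sylow p-subgroup of Γ, ι_p : Γ_p → Γ the inclusion, and π_q : Hol(G) → Hol(G_q) the projection induced by the decomposition Hol(G) ≅ ∏_p Hol(G_p). -/

import Mathlib

/-- The holomorph of a group `G`: the subgroup of `Perm G` generated by the right regular
representation `ρ(g) : x ↦ x * g⁻¹` together with the automorphisms of `G`. -/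
def Hol (G : Type*) [Group G] : Subgroup (Equiv.Perm G) :=
  Subgroup.closure
    ((Set.range fun g : G => Equiv.mulRight g⁻¹) ∪
      (Set.range fun f : MulAut G => (f : G ≃* G).toEquiv))

/-- An auxiliary equivalence: the fiber of the first projection of a product. -/
def fstFiberEquiv {A B : Type*} (z : A) : {w : A × B // w.1 = z} ≃ B where
  toFun w := w.1.2
  invFun b := ⟨(z, b), rfl⟩
  left_inv := by rintro ⟨⟨a, b⟩, rfl⟩; rfl
  right_inv b := rfl

/-- Let `Γ = ∏_p Γ_p` and `G = ∏_p G_p` be nilpotent groups of order `n`, presented via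
their Sylow decompositions (`Γ_p`, `G_p` of order `p^{v_p}`), and let
`β : Γ →* Hol G = ∏_p Hol G_p` be a regular embedding (injective, with image acting
regularly on `G = ∏_p G_p` componentwise).  Then for distinct primes `p ≠ q` dividing
`n`, the component `π_q ∘ β ∘ ι_p : Γ_p → Hol G_q` is trivial. -/
theorem offdiagonal_components_trivial (n : ℕ) (hn : 0 < n)
    (Γ G : n.primeFactors → Type) [∀ p, Group (Γ p)] [∀ p, Group (G p)]
    [∀ p, Finite (Γ p)] [∀ p, Finite (G p)]
    (hΓ : ∀ p : n.primeFactors, Nat.card (Γ p) = (p : ℕ) ^ n.factorization (p : ℕ))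
    (hG : ∀ p : n.primeFactors, Nat.card (G p) = (p : ℕ) ^ n.factorization (p : ℕ))
    (β : (∀ p, Γ p) →* ∀ p, Hol (G p))
    (hβinj : Function.Injective β)
    (hreg : ∀ x y : ∀ p, G p, ∃! γ : ∀ p, Γ p,
      (fun p => ((β γ p : Equiv.Perm (G p)) (x p))) = y) :
    ∀ p q : n.primeFactors, p ≠ q → ∀ γ : Γ p, β (Pi.mulSingle p γ) q = 1 := by
  classical
  intro p q hpq γ
  have hpprime : Nat.Prime (p : ℕ) := Nat.prime_of_mem_primeFactors p.2
  have hqprime : Nat.Prime (q : ℕ) := Nat.prime_of_mem_primeFactors q.2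
  have hpq' : (p : ℕ) ≠ (q : ℕ) := fun h => hpq (Subtype.ext h)
  -- cardinality of the product groups
  have cardΓ : Nat.card (∀ r, Γ r) = n := by
    rw [Nat.card_pi]
    calc ∏ r : n.primeFactors, Nat.card (Γ r)
        = ∏ r : n.primeFactors, (r : ℕ) ^ n.factorization (r : ℕ) :=
          Finset.prod_congr rfl fun r _ => hΓ r
      _ = ∏ r ∈ n.primeFactors, r ^ n.factorization r :=
          Finset.prod_coe_sort n.primeFactors (fun r => r ^ n.factorization r)
      _ = n := by
          conv_rhs => rw [← Nat.factorization_prod_pow_eq_self hn.ne']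
          rw [Finsupp.prod, Nat.support_factorization]
  have cardG : Nat.card (∀ r, G r) = n := by
    rw [Nat.card_pi]
    calc ∏ r : n.primeFactors, Nat.card (G r)
        = ∏ r : n.primeFactors, (r : ℕ) ^ n.factorization (r : ℕ) :=
          Finset.prod_congr rfl fun r _ => hG r
      _ = ∏ r ∈ n.primeFactors, r ^ n.factorization r :=
          Finset.prod_coe_sort n.primeFactors (fun r => r ^ n.factorization r)
      _ = n := by
          conv_rhs => rw [← Nat.factorization_prod_pow_eq_self hn.ne']
          rw [Finsupp.prod, Nat.support_factorization]
  -- the q-component of `β (Pi.mulSingle p γ)` fixes every point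
  have key : ∀ z : G q, (β (Pi.mulSingle p γ) q : Equiv.Perm (G q)) z = z := by
    intro z
    -- the stabilizer of `z` under the q-component action
    set T : Subgroup (∀ r, Γ r) :=
      { carrier := {δ | (β δ q : Equiv.Perm (G q)) z = z}
        one_mem' := by simp
        mul_mem' := by
          intro a b ha hb
          simp only [Set.mem_setOf_eq] at *
          rw [map_mul, Pi.mul_apply, Subgroup.coe_mul, Equiv.Perm.mul_apply, hb, ha]
        inv_mem' := by
          intro a ha
          simp only [Set.mem_setOf_eq] at *
          rw [map_inv, Pi.inv_apply, Subgroup.coe_inv]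
          conv_lhs => rw [← ha]
          exact Equiv.symm_apply_apply _ _ } with hT
    have hTmem : ∀ δ, δ ∈ T ↔ (β δ q : Equiv.Perm (G q)) z = z := fun δ => Iff.rfl
    -- a base point with q-component z
    set x : ∀ r, G r := Function.update (fun r => (1 : G r)) q z with hx
    have hxq : x q = z := Function.update_self q z _
    -- the regular action bijection
    have hbij : Function.Bijective
        (fun δ : (∀ r, Γ r) => (fun r => ((β δ r : Equiv.Perm (G r)) (x r)))) :=
      (Function.bijective_iff_existsUnique _).2 (hreg x)
    set e : (∀ r, Γ r) ≃ (∀ r, G r) := Equiv.ofBijective _ hbij with he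
    -- card of T equals the card of the fiber over z
    have cardT : Nat.card T = Nat.card {y : ∀ r, G r // y q = z} := by
      refine Nat.card_congr (Equiv.subtypeEquiv e fun δ => ?_)
      show δ ∈ T ↔ _
      rw [hTmem]
      show _ ↔ (β δ q : Equiv.Perm (G q)) (x q) = z
      rw [hxq]
    -- fiber card times |G q| is n
    have fibercard : Nat.card {y : ∀ r, G r // y q = z} * Nat.card (G q) = n := by
      have e2 : {y : ∀ r, G r // y q = z} ≃
          {w : G q × (∀ r : {r : n.primeFactors // r ≠ q}, G r) // w.1 = z} :=
        Equiv.subtypeEquiv (Equiv.piSplitAt q G) fun y => Iff.rfl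
      have e3 : {y : ∀ r, G r // y q = z} ≃ (∀ r : {r : n.primeFactors // r ≠ q}, G r) :=
        e2.trans (fstFiberEquiv z)
      rw [Nat.card_congr e3]
      calc Nat.card (∀ r : {r : n.primeFactors // r ≠ q}, G r) * Nat.card (G q)
          = Nat.card (G q × (∀ r : {r : n.primeFactors // r ≠ q}, G r)) := by
            rw [Nat.card_prod, mul_comm]
        _ = Nat.card (∀ r, G r) := (Nat.card_congr (Equiv.piSplitAt q G)).symm
        _ = n := cardG
    have cardTpos : 0 < Nat.card T := Nat.card_pos
    have hTindex : T.index = (q : ℕ) ^ n.factorization (q : ℕ) := by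
      have h1 : T.index * Nat.card T = n := by rw [Subgroup.index_mul_card, cardΓ]
      have h2 : Nat.card T * ((q : ℕ) ^ n.factorization (q : ℕ)) = n := by
        rw [cardT, ← hG q]; exact fibercard
      have := h1.trans h2.symm
      rw [mul_comm (Nat.card T) _] at this
      exact Nat.eq_of_mul_eq_mul_right cardTpos this
    -- the subgroup supported at p
    set K : Subgroup (∀ r, Γ r) := (MonoidHom.mulSingle Γ p).range with hK
    have hKnormal : K.Normal := by
      constructor
      rintro k ⟨c, rfl⟩ g
      refine ⟨g p * c * (g p)⁻¹, funext fun r => ?_⟩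
      by_cases h : r = p
      · subst h
        simp [MonoidHom.mulSingle_apply, Pi.mulSingle_eq_same]
      · simp [MonoidHom.mulSingle_apply, Pi.mulSingle_eq_of_ne h, h]
    have cardK : Nat.card K = (p : ℕ) ^ n.factorization (p : ℕ) := by
      rw [← hΓ p]
      exact Nat.card_congr (MulEquiv.toEquiv
        (MonoidHom.ofInjective (Pi.mulSingle_injective p))).symm
    haveI : Fact (Nat.Prime (p : ℕ)) := ⟨hpprime⟩
    have hKp : IsPGroup (p : ℕ) K := IsPGroup.of_card cardK
    -- K acts on the coset space Γ/T with a fixed point, hence K ≤ T by normality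
    haveI : MulAction.QuotientAction K T :=
      ⟨fun b a a' h => by
        rwa [Subgroup.smul_def, Subgroup.smul_def, smul_eq_mul, smul_eq_mul, mul_inv_rev,
          mul_assoc, inv_mul_cancel_left]⟩
    have hnotdvd : ¬ (p : ℕ) ∣ Nat.card ((∀ r, Γ r) ⧸ T) := by
      rw [← Subgroup.index_eq_card, hTindex]
      intro h
      exact hpq' ((Nat.prime_dvd_prime_iff_eq hpprime hqprime).1 (hpprime.dvd_of_dvd_pow h))
    obtain ⟨b, hb⟩ := hKp.nonempty_fixed_point_of_prime_not_dvd_card _ hnotdvd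
    obtain ⟨a, rfl⟩ := QuotientGroup.mk_surjective b
    have hgK : Pi.mulSingle p γ ∈ K := ⟨γ, rfl⟩
    have hkK : a * (Pi.mulSingle p γ)⁻¹ * a⁻¹ ∈ K :=
      hKnormal.conj_mem _ (K.inv_mem hgK) a
    have hfix := hb ⟨_, hkK⟩
    replace hfix : ((a * (Pi.mulSingle p γ)⁻¹ * a⁻¹ * a : ∀ r, Γ r) : (∀ r, Γ r) ⧸ T) =
        (a : (∀ r, Γ r) ⧸ T) := hfix
    have hmem : (a * (Pi.mulSingle p γ)⁻¹ * a⁻¹ * a)⁻¹ * a ∈ T := QuotientGroup.eq.1 hfix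
    have : Pi.mulSingle p γ ∈ T := by
      convert hmem using 1
      group
    exact (hTmem _).1 this
  have hperm : (β (Pi.mulSingle p γ) q : Equiv.Perm (G q)) = 1 := Equiv.ext fun z => key z
  exact Subtype.ext (hperm.trans (OneMemClass.coe_one _).symm)
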